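/- Let a ≥ 3 be an integer, N ≥ 1, and suppose nonnegative integers N_1, N_2 satisfy N_1 + N_2 = N(N-1) together with the two inequalities N + N_1/(a+1) - N_2/(a-1) ≥ 0 and N + N_1·(-2a-6)/((a²-6)(a+1)³) + N_2·(-2a+6)/((a²-6)(a-1)³) ≥ 0. Then N ≤ (a⁴ - 3a²)/2. -/

import Mathlib

theorem gegenbauer_counting_bound (a : ℤ) (ha : 3 ≤ a) (N N1 N2 : ℕ) (hN : 1 ≤ N)
    (hsum : (N1 : ℝ) + N2 = (N : ℝ) * ((N : ℝ) - 1))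
    (h1 : (N : ℝ) + (N1 : ℝ) / ((a : ℝ) + 1) - (N2 : ℝ) / ((a : ℝ) - 1) ≥ 0)
    (h2 : (N : ℝ) + (N1 : ℝ) * (-2 * (a : ℝ) - 6) / (((a : ℝ) ^ 2 - 6) * ((a : ℝ) + 1) ^ 3)
        + (N2 : ℝ) * (-2 * (a : ℝ) + 6) / (((a : ℝ) ^ 2 - 6) * ((a : ℝ) - 1) ^ 3) ≥ 0) :
    (N : ℝ) ≤ ((a : ℝ) ^ 4 - 3 * (a : ℝ) ^ 2) / 2 := by
  set x : ℝ := (a : ℝ) with hxdef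
  have hx : (3 : ℝ) ≤ x := by rw [hxdef]; exact_mod_cast ha
  have hxp1 : (0 : ℝ) < x + 1 := by linarith
  have hxm1 : (0 : ℝ) < x - 1 := by linarith
  have hx26 : (0 : ℝ) < x ^ 2 - 6 := by nlinarith
  have hNpos : (1 : ℝ) ≤ (N : ℝ) := by exact_mod_cast hN
  have hp1 : (0 : ℝ) < (x + 1) * (x - 1) := mul_pos hxp1 hxm1
  have hpD : (0 : ℝ) < (x ^ 2 - 6) * (x + 1) ^ 3 * (x - 1) ^ 3 :=
    mul_pos (mul_pos hx26 (pow_pos hxp1 3)) (pow_pos hxm1 3)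
  have P1 : 0 ≤ (N : ℝ) * (x ^ 2 - 1) + (N1 : ℝ) * (x - 1) - (N2 : ℝ) * (x + 1) := by
    have key : ((x + 1) * (x - 1)) * ((N : ℝ) + (N1 : ℝ) / (x + 1) - (N2 : ℝ) / (x - 1))
        = (N : ℝ) * (x ^ 2 - 1) + (N1 : ℝ) * (x - 1) - (N2 : ℝ) * (x + 1) := by
      field_simp
      ring
    have := mul_nonneg hp1.le h1
    rw [key] at this
    exact this
  have P2 : 0 ≤ (N : ℝ) * ((x ^ 2 - 6) * (x + 1) ^ 3 * (x - 1) ^ 3)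
      + (N1 : ℝ) * (-2 * x - 6) * (x - 1) ^ 3 + (N2 : ℝ) * (-2 * x + 6) * (x + 1) ^ 3 := by
    have key : ((x ^ 2 - 6) * (x + 1) ^ 3 * (x - 1) ^ 3) *
        ((N : ℝ) + (N1 : ℝ) * (-2 * x - 6) / ((x ^ 2 - 6) * (x + 1) ^ 3)
          + (N2 : ℝ) * (-2 * x + 6) / ((x ^ 2 - 6) * (x - 1) ^ 3))
        = (N : ℝ) * ((x ^ 2 - 6) * (x + 1) ^ 3 * (x - 1) ^ 3)
          + (N1 : ℝ) * (-2 * x - 6) * (x - 1) ^ 3 + (N2 : ℝ) * (-2 * x + 6) * (x + 1) ^ 3 := by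
      field_simp
    have := mul_nonneg hpD.le h2
    rw [key] at this
    exact this
  have hC : 0 ≤ (N : ℝ) * ((x ^ 4 - 6 * x ^ 2 + 5) * (x ^ 4 - 3 * x ^ 2 - 2))
      - 2 * (x ^ 4 - 6 * x ^ 2 + 5) * ((N : ℝ) * ((N : ℝ) - 1)) := by
    have key : (N : ℝ) * ((x ^ 4 - 6 * x ^ 2 + 5) * (x ^ 4 - 3 * x ^ 2 - 2))
        - 2 * (x ^ 4 - 6 * x ^ 2 + 5) * ((N : ℝ) * ((N : ℝ) - 1))
        = 16 * ((N : ℝ) * (x ^ 2 - 1) + (N1 : ℝ) * (x - 1) - (N2 : ℝ) * (x + 1))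
          + ((N : ℝ) * ((x ^ 2 - 6) * (x + 1) ^ 3 * (x - 1) ^ 3)
            + (N1 : ℝ) * (-2 * x - 6) * (x - 1) ^ 3 + (N2 : ℝ) * (-2 * x + 6) * (x + 1) ^ 3) := by
      linear_combination (2 * (x ^ 4 - 6 * x ^ 2 + 5)) * hsum
    rw [key]
    linarith
  have hfac : (0 : ℝ) < x ^ 4 - 6 * x ^ 2 + 5 := by nlinarith
  nlinarith [hC, mul_pos hfac (lt_of_lt_of_le one_pos hNpos),
    mul_le_mul_of_nonneg_left hNpos hfac.le]
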